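/- Let M = {M ∈ Mat_{2n}(ℂ) : M − Mᵗ = Ω} modulo the equivalence M₁ ~ M₂ iff M₁ = C M₂ Cᵗ for some C ∈ GL_{2n}(ℂ), and let S be the set of orbits of Sp(Ω) acting on symmetric 2n×2n matrices by (C,N) ↦ C N Cᵗ. Then the map [M] ↦ [½(M+Mᵗ)] is a well-defined bijection from M to S. -/

import Mathlib

open Matrix

/-- The standard skew-symmetric (symplectic) matrix `Ω = [[0, I], [-I, 0]]`. -/
def stdOmega (n : ℕ) : Matrix (Fin (2 * n)) (Fin (2 * n)) ℂ :=
  fun i j => if (i : ℕ) + n = (j : ℕ) then 1 else if (j : ℕ) + n = (i : ℕ) then -1 else 0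

/-- Congruence relation on matrices `M` with `M - Mᵗ = Ω`. -/
def mRel (n : ℕ) (M₁ M₂ : {M : Matrix (Fin (2 * n)) (Fin (2 * n)) ℂ // M - Mᵀ = stdOmega n}) :
    Prop :=
  ∃ C : Matrix (Fin (2 * n)) (Fin (2 * n)) ℂ, IsUnit C ∧ M₁.1 = C * M₂.1 * Cᵀ

/-- The `Sp(Ω)`-congruence relation on symmetric matrices. -/
def sRel (n : ℕ) (N₁ N₂ : {N : Matrix (Fin (2 * n)) (Fin (2 * n)) ℂ // Nᵀ = N}) : Prop :=
  ∃ C : Matrix (Fin (2 * n)) (Fin (2 * n)) ℂ,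
    IsUnit C ∧ C * stdOmega n * Cᵀ = stdOmega n ∧ N₁.1 = C * N₂.1 * Cᵀ

lemma stdOmega_transpose (n : ℕ) : (stdOmega n)ᵀ = -(stdOmega n) := by
  ext i j
  have hi := i.isLt
  have hj := j.isLt
  simp only [transpose_apply, stdOmega, Matrix.neg_apply]
  split_ifs <;> (try norm_num) <;> omega

/-- symmetric part map -/
noncomputable def symPart (n : ℕ) (M : {M : Matrix (Fin (2 * n)) (Fin (2 * n)) ℂ // M - Mᵀ = stdOmega n}) :
    {N : Matrix (Fin (2 * n)) (Fin (2 * n)) ℂ // Nᵀ = N} :=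
  ⟨(1/2 : ℂ) • (M.1 + M.1ᵀ), by
    rw [Matrix.transpose_smul, Matrix.transpose_add, Matrix.transpose_transpose, add_comm]⟩

/-- inverse map -/
noncomputable def unsymPart (n : ℕ) (N : {N : Matrix (Fin (2 * n)) (Fin (2 * n)) ℂ // Nᵀ = N}) :
    {M : Matrix (Fin (2 * n)) (Fin (2 * n)) ℂ // M - Mᵀ = stdOmega n} :=
  ⟨N.1 + (1/2 : ℂ) • stdOmega n, by
    rw [transpose_add, transpose_smul, N.2, stdOmega_transpose]
    ext i j
    simp [Matrix.add_apply, Matrix.sub_apply]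
    ring⟩

lemma unsym_sym (n : ℕ) (M : {M : Matrix (Fin (2 * n)) (Fin (2 * n)) ℂ // M - Mᵀ = stdOmega n}) :
    unsymPart n (symPart n M) = M := by
  apply Subtype.ext
  show (1/2 : ℂ) • (M.1 + M.1ᵀ) + (1/2 : ℂ) • stdOmega n = M.1
  ext i j
  have h := congrFun (congrFun M.2 i) j
  simp only [Matrix.sub_apply, Matrix.transpose_apply, Matrix.add_apply,
    Matrix.smul_apply, smul_eq_mul] at h ⊢
  linear_combination (-1/2 : ℂ) * h

lemma sym_unsym (n : ℕ) (N : {N : Matrix (Fin (2 * n)) (Fin (2 * n)) ℂ // Nᵀ = N}) :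
    symPart n (unsymPart n N) = N := by
  apply Subtype.ext
  show (1/2 : ℂ) • ((N.1 + (1/2 : ℂ) • stdOmega n) + (N.1 + (1/2 : ℂ) • stdOmega n)ᵀ) = N.1
  rw [transpose_add, transpose_smul, N.2, stdOmega_transpose]
  ext i j
  simp [Matrix.add_apply]
  ring

lemma symPart_rel (n : ℕ) (M₁ M₂ : {M : Matrix (Fin (2 * n)) (Fin (2 * n)) ℂ // M - Mᵀ = stdOmega n})
    (h : mRel n M₁ M₂) : sRel n (symPart n M₁) (symPart n M₂) := by
  obtain ⟨C, hC, hM⟩ := h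
  refine ⟨C, hC, ?_, ?_⟩
  · have h1 : M₁.1 - M₁.1ᵀ = C * (M₂.1 - M₂.1ᵀ) * Cᵀ := by
      rw [hM]
      simp [transpose_mul, transpose_transpose, Matrix.mul_sub, Matrix.sub_mul, mul_assoc]
    calc C * stdOmega n * Cᵀ = C * (M₂.1 - M₂.1ᵀ) * Cᵀ := by rw [M₂.2]
      _ = M₁.1 - M₁.1ᵀ := h1.symm
      _ = stdOmega n := M₁.2
  · show (1/2 : ℂ) • (M₁.1 + M₁.1ᵀ) = C * ((1/2 : ℂ) • (M₂.1 + M₂.1ᵀ)) * Cᵀ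
    rw [hM]
    simp [transpose_mul, transpose_transpose, Matrix.mul_add, Matrix.add_mul,
      Matrix.mul_smul, Matrix.smul_mul, mul_assoc]

lemma unsymPart_rel (n : ℕ) (N₁ N₂ : {N : Matrix (Fin (2 * n)) (Fin (2 * n)) ℂ // Nᵀ = N})
    (h : sRel n N₁ N₂) : mRel n (unsymPart n N₁) (unsymPart n N₂) := by
  obtain ⟨C, hC, hSp, hN⟩ := h
  refine ⟨C, hC, ?_⟩
  show N₁.1 + (1/2 : ℂ) • stdOmega n = C * (N₂.1 + (1/2 : ℂ) • stdOmega n) * Cᵀ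
  rw [hN, Matrix.mul_add, Matrix.add_mul, Matrix.mul_smul, Matrix.smul_mul, hSp]

/-- Taking the symmetric part `[M] ↦ [½(M + Mᵗ)]` gives a
well-defined bijection from the set of congruence classes of matrices with
`M - Mᵗ = Ω` to the set of `Sp(Ω)`-orbits of symmetric matrices. -/
theorem symmetric_part_bijection (n : ℕ) :
    ∃ F : Quot (mRel n) → Quot (sRel n),
      Function.Bijective F ∧
      ∀ M : {M : Matrix (Fin (2 * n)) (Fin (2 * n)) ℂ // M - Mᵀ = stdOmega n},
        F (Quot.mk (mRel n) M) =
          Quot.mk (sRel n) ⟨(1/2 : ℂ) • (M.1 + M.1ᵀ), by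
            rw [Matrix.transpose_smul, Matrix.transpose_add, Matrix.transpose_transpose,
              add_comm]⟩ := by
  refine ⟨Quot.lift (fun M => Quot.mk (sRel n) (symPart n M))
      (fun a b h => Quot.sound (symPart_rel n a b h)), ?_, fun M => rfl⟩
  rw [Function.bijective_iff_has_inverse]
  refine ⟨Quot.lift (fun N => Quot.mk (mRel n) (unsymPart n N))
      (fun a b h => Quot.sound (unsymPart_rel n a b h)), ?_, ?_⟩
  · intro q
    induction q using Quot.ind with
    | _ M => exact congrArg (Quot.mk (mRel n)) (unsym_sym n M)
  · intro q
    induction q using Quot.ind with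
    | _ N => exact congrArg (Quot.mk (sRel n)) (sym_unsym n N)
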